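/- Let d ≥ 4 and let ω = exp(2πi/((d-1)(d-2))). Define the d × d matrix U with eigendecomposition U = |v_1⟩⟨v_1| - |v_2⟩⟨v_2| + Σ_{j=1}^{d-2} e^{2πij/(d-2)} |v_{j+2}⟩⟨v_{j+2}|, where v_1 = (1/√2, 1/√(2d-2), ..., 1/√(2d-2)), v_2 = (1/√2, -1/√(2d-2), ..., -1/√(2d-2)), and for 1 ≤ j ≤ d-2, v_{j+2} = (1/√(d-1))·(0, ω_{d-1}^0, ω_{d-1}^j, ω_{d-1}^{2j}, ..., ω_{d-1}^{j(d-2)}) with ω_{d-1} = exp(2πi/(d-1)). Then U is unitary and all diagonal entries of U are zero. -/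

import Mathlib

/-- `uroot n = exp(2πi/n)`, a primitive `n`-th root of unity. -/
noncomputable def uroot (n : ℕ) : ℂ := Complex.exp (2 * Real.pi * Complex.I / n)

lemma uroot_prim (n : ℕ) (hn : n ≠ 0) : IsPrimitiveRoot (uroot n) n :=
  Complex.isPrimitiveRoot_exp n hn

lemma uroot_pow_self (n : ℕ) (hn : n ≠ 0) : uroot n ^ n = 1 :=
  ((uroot_prim n hn).pow_eq_one_iff_dvd n).2 dvd_rfl

lemma uroot_ne_one (n : ℕ) (hn : 2 ≤ n) : uroot n ≠ 1 :=
  (uroot_prim n (by omega)).ne_one hn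

lemma geom_uroot (n m : ℕ) (hn : n ≠ 0) (hm : ¬ n ∣ m) :
    ∑ k : Fin n, uroot n ^ (m * (k : ℕ)) = 0 := by
  have h1 : uroot n ^ m ≠ 1 := fun h => hm (((uroot_prim n hn).pow_eq_one_iff_dvd m).1 h)
  have h2 : ∑ k : Fin n, uroot n ^ (m * (k : ℕ)) = ∑ k ∈ Finset.range n, (uroot n ^ m) ^ k := by
    rw [← Fin.sum_univ_eq_sum_range fun k => (uroot n ^ m) ^ k]
    exact Finset.sum_congr rfl fun k _ => by rw [← pow_mul]
  rw [h2, geom_sum_eq h1, ← pow_mul, mul_comm m n, pow_mul, uroot_pow_self n hn, one_pow]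
  simp

lemma uroot_conj_mul (n : ℕ) : (starRingEnd ℂ) (uroot n) * uroot n = 1 := by
  unfold uroot
  rw [← Complex.exp_conj, ← Complex.exp_add]
  rw [show (starRingEnd ℂ) (2 * (Real.pi:ℂ) * Complex.I / (n:ℂ)) = -(2 * (Real.pi:ℂ) * Complex.I / (n:ℂ)) by
    simp only [map_div₀, map_mul, Complex.conj_I, Complex.conj_ofReal, map_ofNat, map_natCast]
    ring]
  simp

lemma uroot_conj (n : ℕ) (hn : n ≠ 0) :
    (starRingEnd ℂ) (uroot n) = uroot n ^ (n - 1) := by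
  have h : uroot n ^ (n - 1) * uroot n = 1 := by
    rw [← pow_succ, Nat.sub_add_cancel (Nat.one_le_iff_ne_zero.2 hn), uroot_pow_self n hn]
  have hne : uroot n ≠ 0 := by
    intro h0
    have := uroot_pow_self n hn
    rw [h0, zero_pow hn] at this
    exact zero_ne_one this
  exact mul_right_cancel₀ hne ((uroot_conj_mul n).trans h.symm)

lemma uroot_conj_pow (n m : ℕ) (hn : n ≠ 0) :
    (starRingEnd ℂ) (uroot n ^ m) = uroot n ^ ((n - 1) * m) := by
  rw [map_pow, uroot_conj n hn, ← pow_mul]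

lemma uroot_mul_conj_pow (n m : ℕ) : uroot n ^ m * (starRingEnd ℂ) (uroot n ^ m) = 1 := by
  rw [map_pow, ← mul_pow, mul_comm (uroot n), uroot_conj_mul, one_pow]


/-- The eigenvectors `v₁, …, v_d` (0-indexed) described in the paper:
`v 0 = (1/√2, 1/√(2d-2), …)`, `v 1 = (1/√2, -1/√(2d-2), …)`, and for `t ≥ 2`,
`v t = (1/√(d-1)) (0, 1, ω^{j}, ω^{2j}, …, ω^{j(d-2)})` with `j = t - 1` and
`ω = exp(2πi/(d-1))`. -/
noncomputable def evec (d : ℕ) (t : Fin d) : Fin d → ℂ :=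
  if t.val = 0 then
    fun a => if a.val = 0 then (Real.sqrt 2 : ℂ)⁻¹
             else ((Real.sqrt (2 * (d : ℝ) - 2) : ℝ) : ℂ)⁻¹
  else if t.val = 1 then
    fun a => if a.val = 0 then (Real.sqrt 2 : ℂ)⁻¹
             else -((Real.sqrt (2 * (d : ℝ) - 2) : ℝ) : ℂ)⁻¹
  else
    fun a => if a.val = 0 then 0
             else ((Real.sqrt ((d : ℝ) - 1) : ℝ) : ℂ)⁻¹ *
                    uroot (d - 1) ^ ((t.val - 1) * (a.val - 1))

/-- The eigenvalues: `λ 0 = 1`, `λ 1 = -1`, and `λ t = exp(2πi(t-1)/(d-2))` for `t ≥ 2`. -/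
noncomputable def eval' (d : ℕ) (t : Fin d) : ℂ :=
  if t.val = 0 then 1 else if t.val = 1 then -1 else uroot (d - 2) ^ (t.val - 1)

/-- The matrix `U = Σ_t λ_t |v_t⟩⟨v_t|`. -/
noncomputable def Umat (d : ℕ) : Matrix (Fin d) (Fin d) ℂ :=
  fun a b => ∑ t, eval' d t * evec d t a * (starRingEnd ℂ) (evec d t b)

lemma ortho (n : ℕ) (hn : 3 ≤ n) (s t : Fin (n+1)) :
    ∑ a, (starRingEnd ℂ) (evec (n+1) s a) * evec (n+1) t a = if s = t then 1 else 0 := by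
  have hn0 : n ≠ 0 := by omega
  have hnC : (n : ℂ) ≠ 0 := Nat.cast_ne_zero.2 hn0
  haveI : NeZero n := ⟨hn0⟩
  have e1 : 2 * (((n+1 : ℕ)) : ℝ) - 2 = ((2*n : ℕ) : ℝ) := by push_cast; ring
  have e2 : (((n+1 : ℕ)) : ℝ) - 1 = ((n : ℕ) : ℝ) := by push_cast; ring
  have hc0 : ((Real.sqrt 2 : ℝ) : ℂ)⁻¹ * ((Real.sqrt 2 : ℝ) : ℂ)⁻¹ = 2⁻¹ := by
    rw [← mul_inv, ← Complex.ofReal_mul, Real.mul_self_sqrt (by norm_num)]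
    norm_num
  have hc1 : ((Real.sqrt ((2*n : ℕ) : ℝ) : ℝ) : ℂ)⁻¹ * ((Real.sqrt ((2*n : ℕ) : ℝ) : ℝ) : ℂ)⁻¹
      = ((2*n : ℕ) : ℂ)⁻¹ := by
    rw [← mul_inv, ← Complex.ofReal_mul, Real.mul_self_sqrt (by positivity)]
    push_cast
    ring
  have hc2 : ((Real.sqrt ((n : ℕ) : ℝ) : ℝ) : ℂ)⁻¹ * ((Real.sqrt ((n : ℕ) : ℝ) : ℝ) : ℂ)⁻¹
      = ((n : ℕ) : ℂ)⁻¹ := by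
    rw [← mul_inv, ← Complex.ofReal_mul, Real.mul_self_sqrt (by positivity)]
    push_cast
    ring
  have keydvd : ∀ p q : ℕ, p ≤ n - 1 → q ≤ n - 1 → p ≠ q → ¬ n ∣ ((n-1) * p + q) := by
    intro p q hp hq hpq hdvd
    have h0 : (((n-1) * p + q : ℕ) : ZMod n) = 0 :=
      (ZMod.natCast_eq_zero_iff _ _).2 hdvd
    have hm1 : ((n - 1 : ℕ) : ZMod n) = -1 := by
      rw [Nat.cast_sub (by omega), Nat.cast_one, ZMod.natCast_self, zero_sub]
    rw [Nat.cast_add, Nat.cast_mul, hm1] at h0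
    have hq' : ((q : ℕ) : ZMod n) = ((p : ℕ) : ZMod n) := by linear_combination h0
    have := Nat.ModEq.eq_of_lt_of_lt ((ZMod.natCast_eq_natCast_iff _ _ _).1 hq')
      (by omega) (by omega)
    omega
  have hgsum : ∀ p q : ℕ, p ≤ n-1 → q ≤ n-1 → p ≠ q →
      ∑ i : Fin n, uroot n ^ (((n-1)*p + q) * (i:ℕ)) = 0 :=
    fun p q hp hq hpq => geom_uroot n _ hn0 (keydvd p q hp hq hpq)
  have harith1 : (2⁻¹ : ℂ) + (n : ℂ) * ((2*n : ℕ) : ℂ)⁻¹ = 1 := by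
    push_cast
    field_simp
    ring
  have harith2 : (2⁻¹ : ℂ) + -((n : ℂ) * ((2*n : ℕ) : ℂ)⁻¹) = 0 := by
    push_cast
    field_simp
    ring
  have hcase : ∀ (u : Fin (n + 1)), u.val = 0 ∨ u.val = 1 ∨ (2 ≤ u.val ∧ u.val ≤ n) :=
    fun u => by have := u.isLt; omega
  rcases hcase s with hs | hs | hs <;> rcases hcase t with ht | ht | ht
  -- (0,0)
  · rw [if_pos (Fin.val_injective (hs.trans ht.symm)), Fin.sum_univ_succ]
    simp only [evec, hs, ht, reduceIte, Fin.val_zero, Fin.val_succ, Nat.succ_ne_zero,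
      map_inv₀, Complex.conj_ofReal, e1, Finset.sum_const, Finset.card_univ,
      Fintype.card_fin, nsmul_eq_mul]
    rw [hc0, hc1, harith1]
  -- (0,1)
  · rw [if_neg (fun h => by rw [h] at hs; omega), Fin.sum_univ_succ]
    simp only [evec, hs, ht, reduceIte, Fin.val_zero, Fin.val_succ, Nat.succ_ne_zero,
      map_inv₀, Complex.conj_ofReal, e1, mul_neg, Finset.sum_neg_distrib,
      Finset.sum_const, Finset.card_univ, Fintype.card_fin, nsmul_eq_mul, one_ne_zero]
    rw [hc0, hc1, harith2]
  -- (0, t≥2)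
  · have ht0 : t.val ≠ 0 := by omega
    have ht1 : t.val ≠ 1 := by omega
    rw [if_neg (fun h => by rw [h] at hs; omega), Fin.sum_univ_succ]
    simp only [evec, hs, ht0, ht1, reduceIte, Fin.val_zero, Fin.val_succ, Nat.succ_ne_zero,
      map_inv₀, Complex.conj_ofReal, e1, e2, Nat.add_sub_cancel, mul_zero, zero_add]
    have : ∀ x : Fin n, ((Real.sqrt ((2*n : ℕ) : ℝ) : ℝ) : ℂ)⁻¹ *
        (((Real.sqrt ((n : ℕ) : ℝ) : ℝ) : ℂ)⁻¹ * uroot n ^ ((t.val - 1) * (x : ℕ)))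
        = (((Real.sqrt ((2*n : ℕ) : ℝ) : ℝ) : ℂ)⁻¹ * ((Real.sqrt ((n : ℕ) : ℝ) : ℝ) : ℂ)⁻¹)
          * uroot n ^ (((n-1)*0 + (t.val - 1)) * (x : ℕ)) := by
      intro x; rw [show (n-1)*0 + (t.val - 1) = t.val - 1 by ring]; ring
    rw [Finset.sum_congr rfl fun x _ => this x, ← Finset.mul_sum,
      hgsum 0 (t.val - 1) (by omega) (by omega) (by omega), mul_zero]
  -- (1,0)
  · rw [if_neg (fun h => by rw [h] at hs; omega), Fin.sum_univ_succ]
    simp only [evec, hs, ht, reduceIte, Fin.val_zero, Fin.val_succ, Nat.succ_ne_zero,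
      map_inv₀, Complex.conj_ofReal, map_neg, e1, neg_mul, Finset.sum_neg_distrib,
      Finset.sum_const, Finset.card_univ, Fintype.card_fin, nsmul_eq_mul, one_ne_zero]
    rw [hc0, hc1, harith2]
  -- (1,1)
  · rw [if_pos (Fin.val_injective (hs.trans ht.symm)), Fin.sum_univ_succ]
    simp only [evec, hs, ht, reduceIte, Fin.val_zero, Fin.val_succ, Nat.succ_ne_zero,
      map_inv₀, Complex.conj_ofReal, map_neg, e1, neg_mul_neg, Finset.sum_const,
      Finset.card_univ, Fintype.card_fin, nsmul_eq_mul, one_ne_zero]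
    rw [hc0, hc1, harith1]
  -- (1, t≥2)
  · have ht0 : t.val ≠ 0 := by omega
    have ht1 : t.val ≠ 1 := by omega
    rw [if_neg (fun h => by rw [h] at hs; omega), Fin.sum_univ_succ]
    simp only [evec, hs, ht0, ht1, reduceIte, Fin.val_zero, Fin.val_succ, Nat.succ_ne_zero,
      map_inv₀, Complex.conj_ofReal, map_neg, e1, e2, Nat.add_sub_cancel, mul_zero,
      zero_add, neg_mul, one_ne_zero]
    have : ∀ x : Fin n, -(((Real.sqrt ((2*n : ℕ) : ℝ) : ℝ) : ℂ)⁻¹ *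
        (((Real.sqrt ((n : ℕ) : ℝ) : ℝ) : ℂ)⁻¹ * uroot n ^ ((t.val - 1) * (x : ℕ))))
        = (-(((Real.sqrt ((2*n : ℕ) : ℝ) : ℝ) : ℂ)⁻¹ * ((Real.sqrt ((n : ℕ) : ℝ) : ℝ) : ℂ)⁻¹))
          * uroot n ^ (((n-1)*0 + (t.val - 1)) * (x : ℕ)) := by
      intro x; rw [show (n-1)*0 + (t.val - 1) = t.val - 1 by ring]; ring
    rw [Finset.sum_congr rfl fun x _ => this x, ← Finset.mul_sum,
      hgsum 0 (t.val - 1) (by omega) (by omega) (by omega), mul_zero]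
  -- (s≥2, 0)
  · have hs0 : s.val ≠ 0 := by omega
    have hs1 : s.val ≠ 1 := by omega
    rw [if_neg (fun h => by rw [h] at hs; omega), Fin.sum_univ_succ]
    simp only [evec, hs0, hs1, ht, reduceIte, Fin.val_zero, Fin.val_succ, Nat.succ_ne_zero,
      map_zero, zero_mul, zero_add, map_mul, map_inv₀, Complex.conj_ofReal, e1, e2,
      Nat.add_sub_cancel, uroot_conj_pow n _ hn0, one_ne_zero]
    have : ∀ x : Fin n, ((Real.sqrt ((n : ℕ) : ℝ) : ℝ) : ℂ)⁻¹ *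
        uroot n ^ ((n-1) * ((s.val - 1) * (x : ℕ))) * ((Real.sqrt ((2*n : ℕ) : ℝ) : ℝ) : ℂ)⁻¹
        = (((Real.sqrt ((n : ℕ) : ℝ) : ℝ) : ℂ)⁻¹ * ((Real.sqrt ((2*n : ℕ) : ℝ) : ℝ) : ℂ)⁻¹)
          * uroot n ^ (((n-1)*(s.val - 1) + 0) * (x : ℕ)) := by
      intro x; rw [show ((n-1)*(s.val-1) + 0) * (x:ℕ) = (n-1)*((s.val-1)*(x:ℕ)) by ring]; ring
    rw [Finset.sum_congr rfl fun x _ => this x, ← Finset.mul_sum,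
      hgsum (s.val - 1) 0 (by omega) (by omega) (by omega), mul_zero]
  -- (s≥2, 1)
  · have hs0 : s.val ≠ 0 := by omega
    have hs1 : s.val ≠ 1 := by omega
    rw [if_neg (fun h => by rw [h] at hs; omega), Fin.sum_univ_succ]
    simp only [evec, hs0, hs1, ht, reduceIte, Fin.val_zero, Fin.val_succ, Nat.succ_ne_zero,
      map_zero, zero_mul, zero_add, map_mul, map_inv₀, Complex.conj_ofReal, e1, e2,
      Nat.add_sub_cancel, uroot_conj_pow n _ hn0, mul_neg, Finset.sum_neg_distrib,
      one_ne_zero]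
    have : ∀ x : Fin n, ((Real.sqrt ((n : ℕ) : ℝ) : ℝ) : ℂ)⁻¹ *
        uroot n ^ ((n-1) * ((s.val - 1) * (x : ℕ))) * ((Real.sqrt ((2*n : ℕ) : ℝ) : ℝ) : ℂ)⁻¹
        = (((Real.sqrt ((n : ℕ) : ℝ) : ℝ) : ℂ)⁻¹ * ((Real.sqrt ((2*n : ℕ) : ℝ) : ℝ) : ℂ)⁻¹)
          * uroot n ^ (((n-1)*(s.val - 1) + 0) * (x : ℕ)) := by
      intro x; rw [show ((n-1)*(s.val-1) + 0) * (x:ℕ) = (n-1)*((s.val-1)*(x:ℕ)) by ring]; ring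
    rw [Finset.sum_congr rfl fun x _ => this x, ← Finset.mul_sum,
      hgsum (s.val - 1) 0 (by omega) (by omega) (by omega), mul_zero, neg_zero]
  -- (s≥2, t≥2)
  · have hs0 : s.val ≠ 0 := by omega
    have hs1 : s.val ≠ 1 := by omega
    have ht0 : t.val ≠ 0 := by omega
    have ht1 : t.val ≠ 1 := by omega
    rw [Fin.sum_univ_succ]
    simp only [evec, hs0, hs1, ht0, ht1, reduceIte, Fin.val_zero, Fin.val_succ,
      Nat.succ_ne_zero, map_zero, zero_mul, zero_add, map_mul, map_inv₀,
      Complex.conj_ofReal, e2, Nat.add_sub_cancel, uroot_conj_pow n _ hn0]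
    by_cases hst : s = t
    · subst hst
      rw [if_pos rfl]
      have : ∀ x : Fin n, ((Real.sqrt ((n : ℕ) : ℝ) : ℝ) : ℂ)⁻¹ *
          uroot n ^ ((n-1) * ((s.val - 1) * (x : ℕ))) *
          (((Real.sqrt ((n : ℕ) : ℝ) : ℝ) : ℂ)⁻¹ * uroot n ^ ((s.val - 1) * (x : ℕ)))
          = ((Real.sqrt ((n : ℕ) : ℝ) : ℝ) : ℂ)⁻¹ * ((Real.sqrt ((n : ℕ) : ℝ) : ℝ) : ℂ)⁻¹ := by
        intro x
        have he : (n-1) * ((s.val - 1) * (x:ℕ)) + (s.val - 1) * (x:ℕ)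
            = n * ((s.val - 1) * (x:ℕ)) := by
          rw [Nat.sub_mul, one_mul,
            Nat.sub_add_cancel (Nat.le_mul_of_pos_left _ (by omega))]
        have hone : uroot n ^ ((n-1) * ((s.val - 1) * (x:ℕ))) *
            uroot n ^ ((s.val - 1) * (x:ℕ)) = 1 := by
          rw [← pow_add, he, pow_mul, uroot_pow_self n hn0, one_pow]
        linear_combination (((Real.sqrt ((n : ℕ) : ℝ) : ℝ) : ℂ)⁻¹ *
          ((Real.sqrt ((n : ℕ) : ℝ) : ℝ) : ℂ)⁻¹) * hone
      rw [Finset.sum_congr rfl fun x _ => this x, Finset.sum_const, Finset.card_univ,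
        Fintype.card_fin, nsmul_eq_mul, hc2]
      field_simp
    · rw [if_neg hst]
      have hpq : s.val - 1 ≠ t.val - 1 := fun h => hst (Fin.val_injective (by omega))
      have : ∀ x : Fin n, ((Real.sqrt ((n : ℕ) : ℝ) : ℝ) : ℂ)⁻¹ *
          uroot n ^ ((n-1) * ((s.val - 1) * (x : ℕ))) *
          (((Real.sqrt ((n : ℕ) : ℝ) : ℝ) : ℂ)⁻¹ * uroot n ^ ((t.val - 1) * (x : ℕ)))
          = (((Real.sqrt ((n : ℕ) : ℝ) : ℝ) : ℂ)⁻¹ * ((Real.sqrt ((n : ℕ) : ℝ) : ℝ) : ℂ)⁻¹)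
            * uroot n ^ (((n-1)*(s.val - 1) + (t.val - 1)) * (x : ℕ)) := by
        intro x
        rw [show ((n-1)*(s.val-1) + (t.val-1)) * (x:ℕ)
            = (n-1)*((s.val-1)*(x:ℕ)) + (t.val-1)*(x:ℕ) by ring, pow_add]
        ring
      rw [Finset.sum_congr rfl fun x _ => this x, ← Finset.mul_sum,
        hgsum (s.val - 1) (t.val - 1) (by omega) (by omega) hpq, mul_zero]


lemma rowsum (n : ℕ) (hn : 3 ≤ n) (a b : Fin (n+1)) :
    ∑ t, evec (n+1) t a * (starRingEnd ℂ) (evec (n+1) t b) = if a = b then 1 else 0 := by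
  have hVV : star (Matrix.of fun (a : Fin (n+1)) t => evec (n+1) t a) *
      (Matrix.of fun (a : Fin (n+1)) t => evec (n+1) t a) = 1 := by
    ext s t
    rw [Matrix.mul_apply, Matrix.one_apply]
    simp only [Matrix.star_apply, Matrix.of_apply, ← starRingEnd_apply]
    exact ortho n hn s t
  have h2 : ((Matrix.of fun (a : Fin (n+1)) t => evec (n+1) t a) *
      star (Matrix.of fun (a : Fin (n+1)) t => evec (n+1) t a)) a b
      = (1 : Matrix (Fin (n+1)) (Fin (n+1)) ℂ) a b := by
    rw [mul_eq_one_comm.mp hVV]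
  rw [Matrix.mul_apply, Matrix.one_apply] at h2
  simp only [Matrix.star_apply, Matrix.of_apply, ← starRingEnd_apply] at h2
  exact h2

lemma eval_mul_conj (d : ℕ) (hd : 4 ≤ d) (t : Fin d) :
    eval' d t * (starRingEnd ℂ) (eval' d t) = 1 := by
  unfold eval'
  split_ifs
  · simp
  · simp
  · exact uroot_mul_conj_pow (d-2) (t.val - 1)


theorem stmt4 (d : ℕ) (hd : 4 ≤ d) :
    Umat d ∈ Matrix.unitaryGroup (Fin d) ℂ ∧ ∀ a : Fin d, Umat d a a = 0 := by
  obtain ⟨n, rfl⟩ : ∃ n, d = n + 1 := ⟨d - 1, by omega⟩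
  have hn : 3 ≤ n := by omega
  constructor
  · rw [Matrix.mem_unitaryGroup_iff]
    ext a b
    rw [Matrix.mul_apply, Matrix.one_apply]
    calc ∑ c, Umat (n+1) a c * star (Umat (n+1)) c b
        = ∑ c, ∑ s, ∑ t, (eval' (n+1) s * (starRingEnd ℂ) (eval' (n+1) t) * evec (n+1) s a *
              (starRingEnd ℂ) (evec (n+1) t b)) *
              ((starRingEnd ℂ) (evec (n+1) s c) * evec (n+1) t c) := by
          refine Finset.sum_congr rfl fun c _ => ?_
          rw [Matrix.star_apply, ← starRingEnd_apply]
          simp only [Umat, map_sum, map_mul, Complex.conj_conj, Finset.sum_mul_sum]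
          exact Finset.sum_congr rfl fun s _ => Finset.sum_congr rfl fun t _ => by ring
      _ = ∑ s, ∑ t, (eval' (n+1) s * (starRingEnd ℂ) (eval' (n+1) t) * evec (n+1) s a *
              (starRingEnd ℂ) (evec (n+1) t b)) *
              ∑ c, (starRingEnd ℂ) (evec (n+1) s c) * evec (n+1) t c := by
          rw [Finset.sum_comm]
          refine Finset.sum_congr rfl fun s _ => ?_
          rw [Finset.sum_comm]
          exact Finset.sum_congr rfl fun t _ => by rw [← Finset.mul_sum]
      _ = ∑ s, (eval' (n+1) s * (starRingEnd ℂ) (eval' (n+1) s) * evec (n+1) s a *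
              (starRingEnd ℂ) (evec (n+1) s b)) := by
          refine Finset.sum_congr rfl fun s _ => ?_
          rw [Finset.sum_congr rfl fun t _ => by rw [ortho n hn s t]]
          simp only [mul_ite, mul_one, mul_zero, Finset.sum_ite_eq, Finset.mem_univ, if_true]
      _ = ∑ s, evec (n+1) s a * (starRingEnd ℂ) (evec (n+1) s b) := by
          refine Finset.sum_congr rfl fun s _ => ?_
          linear_combination (evec (n+1) s a * (starRingEnd ℂ) (evec (n+1) s b)) *
            eval_mul_conj (n+1) (by omega) s
      _ = if a = b then 1 else 0 := rowsum n hn a b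
  · obtain ⟨m, rfl⟩ : ∃ m, n = m + 1 := ⟨n - 1, by omega⟩
    have hm : 2 ≤ m := by omega
    have hm0 : m ≠ 0 := by omega
    intro a
    have hμ : ∑ i : Fin m, uroot m ^ ((i : ℕ) + 1) = 0 := by
      have h1 : ∑ i ∈ Finset.range m, uroot m ^ i = 0 := by
        rw [geom_sum_eq (uroot_ne_one m hm) m, uroot_pow_self m hm0]
        simp
      calc ∑ i : Fin m, uroot m ^ ((i : ℕ) + 1)
          = ∑ i : Fin m, uroot m ^ (i : ℕ) * uroot m := by
            exact Finset.sum_congr rfl fun i _ => by rw [pow_succ]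
        _ = (∑ i ∈ Finset.range m, uroot m ^ i) * uroot m := by
            rw [← Finset.sum_mul, Fin.sum_univ_eq_sum_range (fun i => uroot m ^ i) m]
        _ = 0 := by rw [h1, zero_mul]
    have hif : ∀ k : ℕ, ¬(k + 1 + 1 = 1) := fun k => by omega
    by_cases ha : a.val = 0
    · simp only [Umat, eval', evec]
      rw [Fin.sum_univ_succ, Fin.sum_univ_succ]
      simp only [ha, Fin.val_zero, Fin.val_succ, Nat.succ_ne_zero, hif, reduceIte,
        Nat.add_sub_cancel, map_inv₀, Complex.conj_ofReal, map_zero, mul_zero, zero_mul,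
        Finset.sum_const_zero, add_zero, one_mul, neg_mul]
      ring
    · simp only [Umat, eval', evec]
      rw [Fin.sum_univ_succ, Fin.sum_univ_succ]
      simp only [ha, Fin.val_zero, Fin.val_succ, Nat.succ_ne_zero, hif, reduceIte,
        show m+1+1-2 = m from rfl, Nat.add_sub_cancel, map_inv₀, Complex.conj_ofReal,
        map_neg, map_mul, one_mul, neg_mul, mul_neg, neg_neg]
      have key : ∀ i : Fin m,
          uroot m ^ ((i : ℕ) + 1) *
            (((Real.sqrt (((m+1+1 : ℕ) : ℝ) - 1) : ℝ) : ℂ)⁻¹ *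
              uroot (m+1) ^ (((i : ℕ) + 1) * (a.val - 1))) *
            (((Real.sqrt (((m+1+1 : ℕ) : ℝ) - 1) : ℝ) : ℂ)⁻¹ *
              (starRingEnd ℂ) (uroot (m+1) ^ (((i : ℕ) + 1) * (a.val - 1))))
          = (((Real.sqrt (((m+1+1 : ℕ) : ℝ) - 1) : ℝ) : ℂ)⁻¹ *
              ((Real.sqrt (((m+1+1 : ℕ) : ℝ) - 1) : ℝ) : ℂ)⁻¹) *
              uroot m ^ ((i : ℕ) + 1) := by
        intro i
        linear_combination (uroot m ^ ((i : ℕ) + 1) *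
          ((Real.sqrt (((m+1+1 : ℕ) : ℝ) - 1) : ℝ) : ℂ)⁻¹ *
          ((Real.sqrt (((m+1+1 : ℕ) : ℝ) - 1) : ℝ) : ℂ)⁻¹) *
          uroot_mul_conj_pow (m+1) (((i : ℕ) + 1) * (a.val - 1))
      rw [Finset.sum_congr rfl fun i _ => key i, ← Finset.mul_sum, hμ, mul_zero, add_zero]
      ring
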